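/- Let n be a positive integer, let M be an n×n real symmetric positive definite matrix, and let R be an n×n orthogonal matrix (RᵀR = I) with trace(R M) = trace(M). Then R = I. -/

import Mathlib

open Matrix

/-- Equality case of the orthogonal Procrustes argument: if `M` is symmetric positive
definite, `R` is orthogonal and `trace(R M) = trace M`, then `R = I`. -/
theorem orthogonal_eq_one_of_trace_eq_of_posDef
    (n : ℕ) (hn : 0 < n) (M R : Matrix (Fin n) (Fin n) ℝ)
    (hsym : Mᵀ = M) (hpd : ∀ x : Fin n → ℝ, x ≠ 0 → 0 < x ⬝ᵥ M.mulVec x)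
    (hR : Rᵀ * R = 1) (htr : Matrix.trace (R * M) = Matrix.trace M) :
    R = 1 := by
  have hMpd : M.PosDef := by
    refine Matrix.PosDef.of_dotProduct_mulVec_pos ?_ fun x hx => by simpa using hpd x hx
    rw [Matrix.IsHermitian, Matrix.conjTranspose_eq_transpose_of_trivial, hsym]
  open scoped MatrixOrder in set S := CFC.sqrt M with hS
  have hSherm : S.IsHermitian := by open scoped MatrixOrder in exact (CFC.sqrt_nonneg M).posSemidef.1
  have hSS : S * S = M := by open scoped MatrixOrder in exact CFC.sqrt_mul_sqrt_self M hMpd.posSemidef.nonneg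
  have hSt : Sᵀ = S := by
    rw [← Matrix.conjTranspose_eq_transpose_of_trivial]; exact hSherm
  -- trace of (1-R) M (1-R)ᵀ is zero
  have key : Matrix.trace ((1 - R) * M * (1 - R)ᵀ) = 0 := by
    have h1 : Matrix.trace (R * M * Rᵀ) = Matrix.trace M := by
      rw [Matrix.trace_mul_cycle, hR, Matrix.one_mul]
    have h2 : Matrix.trace (M * Rᵀ) = Matrix.trace (R * M) := by
      rw [← Matrix.trace_transpose (M * Rᵀ), Matrix.transpose_mul,
        Matrix.transpose_transpose, hsym]
    simp only [Matrix.transpose_sub, Matrix.transpose_one, Matrix.sub_mul, Matrix.mul_sub,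
      Matrix.one_mul, Matrix.mul_one, Matrix.trace_sub]
    rw [h1, h2, htr]
    ring
  -- rewrite it as trace (D * Dᵀ) with D = (1-R)*S
  set D := (1 - R) * S with hD
  have hDD : Matrix.trace (D * Dᵀ) = 0 := by
    have hrw : D * Dᵀ = (1 - R) * M * (1 - R)ᵀ := by
      rw [hD, Matrix.transpose_mul, hSt, ← hSS]
      noncomm_ring
    rw [hrw]; exact key
  -- trace (D * Dᵀ) = sum of squares ⟹ D = 0
  have hD0 : D = 0 := by
    have hsum : Matrix.trace (D * Dᵀ) = ∑ i, ∑ j, D i j * D i j := by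
      simp [Matrix.trace, Matrix.mul_apply, Matrix.diag]
    rw [hsum] at hDD
    ext i j
    have h1 : ∀ i ∈ Finset.univ, (0:ℝ) ≤ ∑ j, D i j * D i j := fun i _ =>
      Finset.sum_nonneg fun j _ => mul_self_nonneg _
    have h2 := (Finset.sum_eq_zero_iff_of_nonneg h1).mp hDD i (Finset.mem_univ i)
    have h3 : ∀ j ∈ Finset.univ, (0:ℝ) ≤ D i j * D i j := fun j _ => mul_self_nonneg _
    have h4 := (Finset.sum_eq_zero_iff_of_nonneg h3).mp h2 j (Finset.mem_univ j)
    simpa [mul_self_eq_zero] using h4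
  -- S is invertible
  have hdet : S.det ≠ 0 := by
    intro h
    have : M.det = 0 := by rw [← hSS, Matrix.det_mul, h, mul_zero]
    exact hMpd.det_pos.ne' this
  have : (1 - R) = 0 := by
    have := congrArg (· * S⁻¹) hD0
    simpa [hD, Matrix.mul_assoc, Matrix.mul_nonsing_inv S (isUnit_iff_ne_zero.mpr hdet)]
      using this
  rw [sub_eq_zero] at this
  exact this.symm
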